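/- Let C̄ be a closed convex body in a separable real Hilbert space X that is not a finite intersection of closed half-spaces of continuous linear functionals. Then C̄ hides some infinite set A ⊆ X \ C̄: for all distinct a,b ∈ A the segment [a,b] meets C̄. -/

import Mathlib

open Set

section Abstract

variable {X : Type*} [NormedAddCommGroup X] [NormedSpace ℝ X]

/-- Bundled hypotheses: `p` is a nonnegative sublinear `L`-Lipschitz functional. -/
structure SublinData (p : X → ℝ) (L : ℝ) : Prop where
  add_le : ∀ x y, p (x + y) ≤ p x + p y
  smul_eq : ∀ (c : ℝ) (x : X), 0 ≤ c → p (c • x) = c * p x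
  nonneg : ∀ x, 0 ≤ p x
  Lpos : 0 < L
  lip : ∀ x y, p x ≤ p y + L * ‖x - y‖

namespace SublinData

variable {p : X → ℝ} {L : ℝ}

theorem zero (hp : SublinData p L) : p 0 = 0 := by
  have := hp.smul_eq 0 0 le_rfl
  simpa using this

theorem le_norm (hp : SublinData p L) (x : X) : p x ≤ L * ‖x‖ := by
  have := hp.lip x 0
  simpa [hp.zero] using this

theorem abs_sub_le (hp : SublinData p L) (x y : X) : |p x - p y| ≤ L * ‖x - y‖ := by
  rw [abs_sub_le_iff]
  constructor
  · linarith [hp.lip x y]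
  · have := hp.lip y x
    have h2 : ‖y - x‖ = ‖x - y‖ := norm_sub_rev y x
    rw [h2] at this
    linarith

theorem continuous (hp : SublinData p L) : Continuous p := by
  have : LipschitzWith (Real.toNNReal L) p := by
    apply LipschitzWith.of_dist_le_mul
    intro x y
    have := hp.abs_sub_le x y
    rw [Real.dist_eq, dist_eq_norm]
    calc |p x - p y| ≤ L * ‖x - y‖ := this
    _ ≤ (Real.toNNReal L : ℝ) * ‖x - y‖ := by
        have : L ≤ (Real.toNNReal L : ℝ) := Real.le_coe_toNNReal L
        have hn : (0:ℝ) ≤ ‖x - y‖ := norm_nonneg _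
        nlinarith
  exact this.continuous

theorem combo (hp : SublinData p L) {a b : ℝ} (ha : 0 ≤ a) (hb : 0 ≤ b) (x y : X) :
    p (a • x + b • y) ≤ a * p x + b * p y := by
  calc p (a • x + b • y) ≤ p (a • x) + p (b • y) := hp.add_le _ _
  _ = a * p x + b * p y := by rw [hp.smul_eq a x ha, hp.smul_eq b y hb]

end SublinData

variable (p : X → ℝ)

/-- `g` is a (normalized) supporting functional at `y`. -/
def IsSupp (g : X →L[ℝ] ℝ) (y : X) : Prop := (∀ z, g z ≤ p z) ∧ g y = 1

/-- `y` is a smooth boundary point with unique support `g`. -/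
def Nice (y : X) (g : X →L[ℝ] ℝ) : Prop :=
  p y = 1 ∧ IsSupp p g y ∧ ∀ h, IsSupp p h y → h = g

/-- The set of gradients of smooth points belonging to `R`. -/
def Grads (R : Set X) : Set (X →L[ℝ] ℝ) := {g | ∃ y ∈ R, Nice p y g}

/-- `y` (a boundary point) is blocked from `b`: a supporting hyperplane at `y`
weakly cuts off `b`. -/
def Blocked (b y : X) : Prop :=
  ∃ g : X →L[ℝ] ℝ, (∀ z, g z ≤ p z) ∧ g y = 1 ∧ 1 ≤ g b

/-- The segment from `a` to `b` meets the open unit "ball" of `p`. -/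
def Sees (a b : X) : Prop := ∃ z ∈ segment ℝ a b, p z < 1

theorem sees_symm {a b : X} (h : Sees p a b) : Sees p b a := by
  obtain ⟨z, hz, hpz⟩ := h
  exact ⟨z, segment_symm ℝ a b ▸ hz, hpz⟩

theorem grads_mono {R R' : Set X} (h : R ⊆ R') : Grads p R ⊆ Grads p R' := by
  rintro g ⟨y, hy, hn⟩
  exact ⟨y, h hy, hn⟩

variable {p}
variable {L : ℝ}

/-- Hahn-Banach: every point of the unit sphere of `p` has a supporting functional. -/
theorem support_exists (hp : SublinData p L) {y : X} (hy : p y = 1) :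
    ∃ g : X →L[ℝ] ℝ, IsSupp p g y := by
  have hy0 : y ≠ 0 := by
    intro h
    rw [h, hp.zero] at hy
    norm_num at hy
  set f : X →ₗ.[ℝ] ℝ := LinearPMap.mkSpanSingleton y (1 : ℝ) hy0 with hf
  have hfle : ∀ x : f.domain, f x ≤ p x := by
    rintro ⟨x, hx⟩
    have hx' : x ∈ Submodule.span ℝ {y} := hx
    obtain ⟨c, rfl⟩ := Submodule.mem_span_singleton.1 hx'
    have happ : f ⟨c • y, hx⟩ = c • (1:ℝ) := by
      apply LinearPMap.mkSpanSingleton'_apply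
    rw [happ]
    rcases le_or_gt 0 c with hc | hc
    · have : p (c • y) = c * p y := hp.smul_eq c y hc
      rw [this, hy]
      simp
    · have : (0:ℝ) ≤ p (c • y) := hp.nonneg _
      have : c • (1:ℝ) = c := by simp
      rw [this]
      linarith [hp.nonneg (c • y)]
  obtain ⟨g, hgf, hgle⟩ := exists_extension_of_le_sublinear f p
    (fun c hc x => hp.smul_eq c x hc.le) hp.add_le hfle
  have hgy : g y = 1 := by
    have hmem : y ∈ f.domain := by
      rw [hf]
      exact Submodule.mem_span_singleton_self y
    have := hgf ⟨y, hmem⟩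
    rw [this]
    exact LinearPMap.mkSpanSingleton_apply ℝ ℝ hy0 1
  have hbound : ∀ z, ‖g z‖ ≤ L * ‖z‖ := by
    intro z
    rw [Real.norm_eq_abs, abs_le]
    constructor
    · have h1 : g (-z) ≤ p (-z) := hgle _
      have h2 : p (-z) ≤ L * ‖z‖ := by
        have := hp.le_norm (-z)
        simpa using this
      have : g (-z) = - g z := by simp
      linarith [this ▸ h1]
    · exact (hgle z).trans (hp.le_norm z)
  refine ⟨g.mkContinuous L hbound, ?_, ?_⟩
  · intro z
    exact hgle z
  · exact hgy


theorem blocked_of_not_sees (hp : SublinData p L) {b y : X} (hy : p y = 1)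
    (h : ¬ Sees p b y) : Blocked p b y := by
  have hsopen : IsOpen {x : X | p x < 1} := isOpen_lt hp.continuous continuous_const
  have hsconv : Convex ℝ {x : X | p x < 1} := by
    intro u hu v hv a c ha hc hac
    simp only [mem_setOf_eq] at hu hv ⊢
    have hcombo := hp.combo ha hc u v
    rcases eq_or_lt_of_le ha with ha0 | ha0
    · have : a = 0 := ha0.symm
      subst this
      simp only [zero_add] at hac
      subst hac
      simpa using hv
    · have h1 : a * p u < a * 1 := by
        exact mul_lt_mul_of_pos_left hu ha0
      have h2 : c * p v ≤ c * 1 := mul_le_mul_of_nonneg_left hv.le hc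
      calc p (a • u + c • v) ≤ a * p u + c * p v := hcombo
      _ < a * 1 + c * 1 := by linarith
      _ = 1 := by linarith
  have hdisj : Disjoint {x : X | p x < 1} (segment ℝ b y) := by
    rw [Set.disjoint_left]
    intro z hz hzseg
    exact h ⟨z, hzseg, hz⟩
  obtain ⟨f, u, hfu, hsegf⟩ :=
    geometric_hahn_banach_open hsconv hsopen (convex_segment b y) hdisj
  have hu0 : 0 < u := by
    have h0 : (0:X) ∈ {x : X | p x < 1} := by
      simp [hp.zero]
    have := hfu 0 h0
    simpa using this
  have hgle : ∀ z, (u⁻¹ • f) z ≤ p z := by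
    intro z
    simp only [ContinuousLinearMap.smul_apply, smul_eq_mul]
    by_contra hlt
    push_neg at hlt
    set t := (p z + u⁻¹ * f z) / 2 with ht
    have htz : p z < t := by rw [ht]; linarith
    have htz2 : t < u⁻¹ * f z := by rw [ht]; linarith
    have ht0 : 0 < t := lt_of_le_of_lt (hp.nonneg z) htz
    have hmem : t⁻¹ • z ∈ {x : X | p x < 1} := by
      simp only [mem_setOf_eq]
      rw [hp.smul_eq t⁻¹ z (by positivity)]
      rw [inv_mul_lt_iff₀ ht0]
      linarith
    have := hfu _ hmem
    rw [map_smul] at this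
    simp only [smul_eq_mul] at this
    have hfzu : f z < t * u := by
      have := (inv_mul_lt_iff₀ ht0).1 this
      linarith [this]
    have : u⁻¹ * f z < t := by
      rw [inv_mul_lt_iff₀ hu0]
      linarith [hfzu]
    linarith
  have hgb : 1 ≤ (u⁻¹ • f) b := by
    have h1 : u ≤ f b := hsegf b (left_mem_segment ℝ b y)
    simp only [ContinuousLinearMap.smul_apply, smul_eq_mul]
    calc (1:ℝ) = u⁻¹ * u := by rw [inv_mul_cancel₀ (ne_of_gt hu0)]
    _ ≤ u⁻¹ * f b := mul_le_mul_of_nonneg_left h1 (by positivity)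
  have hgy : (u⁻¹ • f) y = 1 := by
    have h1 : u ≤ f y := hsegf y (right_mem_segment ℝ b y)
    have hge : 1 ≤ (u⁻¹ • f) y := by
      simp only [ContinuousLinearMap.smul_apply, smul_eq_mul]
      calc (1:ℝ) = u⁻¹ * u := by rw [inv_mul_cancel₀ (ne_of_gt hu0)]
      _ ≤ u⁻¹ * f y := mul_le_mul_of_nonneg_left h1 (by positivity)
    have hle : (u⁻¹ • f) y ≤ 1 := by
      calc (u⁻¹ • f) y ≤ p y := hgle y
      _ = 1 := hy
    linarith
  exact ⟨u⁻¹ • f, hgle, hgy, hgb⟩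

section Deriv

variable (p)

/-- difference quotient -/
noncomputable def qd (x d : X) (t : ℝ) : ℝ := (p (x + t • d) - p x) / t

/-- lower directional derivative -/
noncomputable def gd (x d : X) : ℝ := sInf (qd p x d '' Ioi (0:ℝ))

variable {p}

theorem qd_ge (hp : SublinData p L) (x d : X) {t : ℝ} (ht : 0 < t) :
    -(L * ‖d‖) ≤ qd p x d t := by
  have h1 : p x ≤ p (x + t • d) + L * ‖x - (x + t • d)‖ := hp.lip _ _
  have h2 : ‖x - (x + t • d)‖ = t * ‖d‖ := by
    rw [show x - (x + t • d) = -(t • d) by abel]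
    rw [norm_neg, norm_smul, Real.norm_eq_abs, abs_of_pos ht]
  rw [h2] at h1
  rw [qd, le_div_iff₀ ht]
  nlinarith [norm_nonneg d, hp.Lpos]

theorem qd_bdd (hp : SublinData p L) (x d : X) :
    BddBelow (qd p x d '' Ioi (0:ℝ)) := by
  refine ⟨-(L * ‖d‖), ?_⟩
  rintro v ⟨t, ht, rfl⟩
  exact qd_ge hp x d ht

theorem qd_img_nonempty (x d : X) : (qd p x d '' Ioi (0:ℝ)).Nonempty :=
  ⟨qd p x d 1, 1, by norm_num, rfl⟩

theorem gd_le_qd (hp : SublinData p L) (x d : X) {t : ℝ} (ht : 0 < t) :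
    gd p x d ≤ qd p x d t :=
  csInf_le (qd_bdd hp x d) ⟨t, ht, rfl⟩

theorem le_gd {x d : X} {c : ℝ} (h : ∀ t : ℝ, 0 < t → c ≤ qd p x d t) :
    c ≤ gd p x d := by
  apply le_csInf (qd_img_nonempty x d)
  rintro v ⟨t, ht, rfl⟩
  exact h t ht

theorem qd_mono (hp : SublinData p L) (x d : X) {s t : ℝ} (hs : 0 < s) (hst : s ≤ t) :
    qd p x d s ≤ qd p x d t := by
  have ht : 0 < t := lt_of_lt_of_le hs hst
  have hcombo : x + s • d = (1 - s / t) • x + (s / t) • (x + t • d) := by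
    have h1 : s / t * t = s := div_mul_cancel₀ s (ne_of_gt ht)
    match_scalars <;> simp <;> linarith [h1]
  have hst' : s / t ≤ 1 := by
    rw [div_le_one ht]; exact hst
  have h2 : p (x + s • d) ≤ (1 - s / t) * p x + (s / t) * p (x + t • d) := by
    rw [hcombo]
    exact hp.combo (by linarith) (by positivity) x (x + t • d)
  rw [qd, qd, div_le_div_iff₀ hs ht]
  have h3 : p (x + s • d) - p x ≤ (s / t) * (p (x + t • d) - p x) := by nlinarith
  calc (p (x + s • d) - p x) * t ≤ ((s / t) * (p (x + t • d) - p x)) * t := by nlinarith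
  _ = (p (x + t • d) - p x) * s := by field_simp

theorem qd_le_p (hp : SublinData p L) (x d : X) {t : ℝ} (ht : 0 < t) :
    qd p x d t ≤ p d := by
  have h1 : p (x + t • d) ≤ p x + t * p d := by
    calc p (x + t • d) ≤ p x + p (t • d) := hp.add_le _ _
    _ = p x + t * p d := by rw [hp.smul_eq t d ht.le]
  rw [qd, div_le_iff₀ ht]
  nlinarith

theorem gd_le_p (hp : SublinData p L) (x d : X) : gd p x d ≤ p d :=
  (gd_le_qd hp x d one_pos).trans (qd_le_p hp x d one_pos)

theorem gd_ge (hp : SublinData p L) (x d : X) : -(L * ‖d‖) ≤ gd p x d :=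
  le_gd fun t ht => qd_ge hp x d ht

theorem gd_abs_le (hp : SublinData p L) (x d : X) : |gd p x d| ≤ L * ‖d‖ := by
  rw [abs_le]
  refine ⟨gd_ge hp x d, (gd_le_p hp x d).trans (hp.le_norm d)⟩

theorem gd_self (hp : SublinData p L) (x : X) : gd p x x = p x := by
  have hq : ∀ t : ℝ, 0 < t → qd p x x t = p x := by
    intro t ht
    rw [qd, show x + t • x = (1 + t) • x by rw [add_smul, one_smul],
      hp.smul_eq (1 + t) x (by linarith)]
    field_simp
    ring
  refine le_antisymm ?_ (le_gd fun t ht => (hq t ht).ge)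
  calc gd p x x ≤ qd p x x 1 := gd_le_qd hp x x one_pos
  _ = p x := hq 1 one_pos

theorem gd_zero_dir (hp : SublinData p L) (x : X) : gd p x 0 = 0 := by
  have hq : ∀ t : ℝ, 0 < t → qd p x 0 t = 0 := by
    intro t ht
    rw [qd]
    simp
  refine le_antisymm ?_ (le_gd fun t ht => (hq t ht).ge)
  calc gd p x 0 ≤ qd p x 0 1 := gd_le_qd hp x 0 one_pos
  _ = 0 := hq 1 one_pos

theorem qd_add_le (hp : SublinData p L) (x d e : X) {t : ℝ} (ht : 0 < t) :
    qd p x (d + e) t ≤ qd p x d (2 * t) + qd p x e (2 * t) := by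
  have hcombo : x + t • (d + e) =
      (1/2 : ℝ) • (x + (2*t) • d) + (1/2 : ℝ) • (x + (2*t) • e) := by
    match_scalars <;> ring
  have h2 : p (x + t • (d + e)) ≤
      (1/2 : ℝ) * p (x + (2*t) • d) + (1/2 : ℝ) * p (x + (2*t) • e) := by
    rw [hcombo]
    exact hp.combo (by norm_num) (by norm_num) _ _
  rw [qd, qd, qd]
  rw [← add_div, div_le_div_iff₀ ht (by linarith : (0:ℝ) < 2 * t)]
  nlinarith

theorem gd_approx (hp : SublinData p L) (x d : X) {ε : ℝ} (hε : 0 < ε) :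
    ∃ t : ℝ, 0 < t ∧ qd p x d t < gd p x d + ε := by
  have h2 : sInf (qd p x d '' Ioi (0:ℝ)) < gd p x d + ε := by
    rw [← gd]; linarith
  obtain ⟨v, ⟨t, ht, rfl⟩, hv⟩ :=
    (csInf_lt_iff (qd_bdd hp x d) (qd_img_nonempty x d)).1 h2
  exact ⟨t, ht, hv⟩

theorem gd_add (hp : SublinData p L) (x d e : X) :
    gd p x (d + e) ≤ gd p x d + gd p x e := by
  refine le_of_forall_pos_le_add fun ε hε => ?_
  obtain ⟨t₁, ht₁, hq₁⟩ := gd_approx hp x d (half_pos hε)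
  obtain ⟨t₂, ht₂, hq₂⟩ := gd_approx hp x e (half_pos hε)
  set t := min t₁ t₂ / 2 with htdef
  have ht : 0 < t := by positivity
  have h2t₁ : 2 * t ≤ t₁ := by
    rw [htdef]; rw [mul_div_cancel₀]; exact min_le_left _ _; norm_num
  have h2t₂ : 2 * t ≤ t₂ := by
    rw [htdef]; rw [mul_div_cancel₀]; exact min_le_right _ _; norm_num
  calc gd p x (d + e) ≤ qd p x (d + e) t := gd_le_qd hp x _ ht
  _ ≤ qd p x d (2*t) + qd p x e (2*t) := qd_add_le hp x d e ht
  _ ≤ qd p x d t₁ + qd p x e t₂ := by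
      have := qd_mono hp x d (by linarith : (0:ℝ) < 2*t) h2t₁
      have := qd_mono hp x e (by linarith : (0:ℝ) < 2*t) h2t₂
      linarith
  _ ≤ gd p x d + gd p x e + ε := by linarith

theorem gd_smul_pos (hp : SublinData p L) (x d : X) {c : ℝ} (hc : 0 < c) :
    gd p x (c • d) = c * gd p x d := by
  have key : ∀ t : ℝ, 0 < t → qd p x (c • d) t = c * qd p x d (t * c) := by
    intro t ht
    rw [qd, qd]
    rw [show t • (c • d) = (t * c) • d by rw [smul_smul]]
    field_simp
  refine le_antisymm ?_ ?_
  · refine le_of_forall_pos_le_add fun ε hε => ?_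
    obtain ⟨s, hs, hq⟩ := gd_approx hp x d (show 0 < ε / c by positivity)
    have h1 : gd p x (c • d) ≤ qd p x (c • d) (s / c) := gd_le_qd hp x _ (by positivity)
    rw [key _ (by positivity), div_mul_cancel₀ _ (ne_of_gt hc)] at h1
    calc gd p x (c • d) ≤ c * qd p x d s := h1
    _ ≤ c * (gd p x d + ε / c) := by nlinarith
    _ = c * gd p x d + ε := by field_simp
  · apply le_gd
    intro t ht
    rw [key t ht]
    have := gd_le_qd hp x d (show 0 < t * c by positivity)
    nlinarith

theorem gd_lip (hp : SublinData p L) (x d e : X) :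
    gd p x d ≤ gd p x e + L * ‖d - e‖ := by
  refine le_of_forall_pos_le_add fun ε hε => ?_
  obtain ⟨t, ht, hq⟩ := gd_approx hp x e hε
  have h1 : qd p x d t ≤ qd p x e t + L * ‖d - e‖ := by
    have hl : p (x + t • d) ≤ p (x + t • e) + L * ‖(x + t • d) - (x + t • e)‖ := hp.lip _ _
    have hn : ‖(x + t • d) - (x + t • e)‖ = t * ‖d - e‖ := by
      rw [show (x + t • d) - (x + t • e) = t • (d - e) by rw [smul_sub]; abel]
      rw [norm_smul, Real.norm_eq_abs, abs_of_pos ht]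
    rw [hn] at hl
    rw [qd, qd, div_add' _ _ _ (ne_of_gt ht), div_le_div_iff₀ ht ht]
    nlinarith
  calc gd p x d ≤ qd p x d t := gd_le_qd hp x d ht
  _ ≤ qd p x e t + L * ‖d - e‖ := h1
  _ ≤ gd p x e + L * ‖d - e‖ + ε := by linarith

theorem gd_pair_nonneg (hp : SublinData p L) (x d : X) :
    0 ≤ gd p x d + gd p x (-d) := by
  have := gd_add hp x d (-d)
  rw [show d + -d = 0 by abel, gd_zero_dir hp] at this
  linarith

variable (p) in
/-- `p` is (Gâteaux) differentiable at `x`. -/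
def DPt (x : X) : Prop := ∀ d : X, gd p x d + gd p x (-d) = 0

theorem gd_neg_eq (hd : DPt p x) (d : X) : gd p x (-d) = - gd p x d := by
  have := hd d
  linarith

theorem gd_additive (hp : SublinData p L) {x : X} (hd : DPt p x) (d e : X) :
    gd p x (d + e) = gd p x d + gd p x e := by
  refine le_antisymm (gd_add hp x d e) ?_
  have h1 : gd p x (-d + -e) ≤ gd p x (-d) + gd p x (-e) := gd_add hp x (-d) (-e)
  rw [show -d + -e = -(d + e) by abel, gd_neg_eq hd, gd_neg_eq hd, gd_neg_eq hd] at h1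
  linarith

theorem nice_of_dpt (hp : SublinData p L) {x : X} (hd : DPt p x) (hx : 0 < p x) :
    ∃ g : X →L[ℝ] ℝ, Nice p ((p x)⁻¹ • x) g := by
  have hsmul' : ∀ (c : ℝ) (d : X), gd p x (c • d) = c * gd p x d := by
    intro c d
    rcases lt_trichotomy c 0 with hc | hc | hc
    · have h1 : c • d = -((-c) • d) := by rw [neg_smul, neg_neg]
      rw [h1, gd_neg_eq hd, gd_smul_pos hp x d (by linarith : (0:ℝ) < -c)]
      ring
    · subst hc
      rw [zero_smul, gd_zero_dir hp, zero_mul]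
    · exact gd_smul_pos hp x d hc
  set glin : X →ₗ[ℝ] ℝ :=
    { toFun := gd p x
      map_add' := gd_additive hp hd
      map_smul' := by
        intro c d
        simp only [smul_eq_mul, RingHom.id_apply]
        exact hsmul' c d } with hglin
  have hbound : ∀ d, ‖glin d‖ ≤ L * ‖d‖ := by
    intro d
    rw [Real.norm_eq_abs]
    exact gd_abs_le hp x d
  set G : X →L[ℝ] ℝ := glin.mkContinuous L hbound with hG
  have hGapp : ∀ d, G d = gd p x d := fun d => rfl
  set y := (p x)⁻¹ • x with hy
  have hpy : p y = 1 := by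
    rw [hy, hp.smul_eq _ x (by positivity), inv_mul_cancel₀ (ne_of_gt hx)]
  have hGy : G y = 1 := by
    rw [hGapp, hy, hsmul', gd_self hp, inv_mul_cancel₀ (ne_of_gt hx)]
  have hGle : ∀ z, G z ≤ p z := fun z => (hGapp z) ▸ gd_le_p hp x z
  refine ⟨G, hpy, ⟨hGle, hGy⟩, ?_⟩
  rintro h ⟨hle, hhy⟩
  have hhx : h x = p x := by
    have hxy : x = (p x) • y := by
      rw [hy, smul_smul, mul_inv_cancel₀ (ne_of_gt hx), one_smul]
    calc h x = h ((p x) • y) := by rw [← hxy]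
    _ = p x * h y := by rw [map_smul]; simp
    _ = p x := by rw [hhy, mul_one]
  have hkey : ∀ d, h d ≤ gd p x d := by
    intro d
    apply le_gd
    intro t ht
    have h1 : h (x + t • d) ≤ p (x + t • d) := hle _
    rw [map_add, map_smul] at h1
    simp only [smul_eq_mul] at h1
    rw [hhx] at h1
    rw [qd, le_div_iff₀ ht]
    linarith
  ext d
  rw [hGapp]
  refine le_antisymm (hkey d) ?_
  have h2 := hkey (-d)
  rw [map_neg, gd_neg_eq hd] at h2
  linarith

set_option maxHeartbeats 2000000 in
theorem dense_dpt [CompleteSpace X] [TopologicalSpace.SeparableSpace X]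
    (hp : SublinData p L) : Dense {x : X | DPt p x} := by
  haveI hne : Nonempty X := ⟨0⟩
  obtain ⟨ds, hdr⟩ := TopologicalSpace.exists_dense_seq X
  set U : ℕ → ℕ → Set X := fun i k =>
    {x | ∃ t : ℝ, 0 < t ∧
      p (x + t • ds i) + p (x - t • ds i) - 2 * p x < t / ((k:ℝ)+1)} with hU
  have hopen : ∀ i k, IsOpen (U i k) := by
    intro i k
    have : U i k = ⋃ t ∈ Ioi (0:ℝ),
        {x | p (x + t • ds i) + p (x - t • ds i) - 2 * p x < t / ((k:ℝ)+1)} := by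
      ext x
      simp only [hU, mem_setOf_eq, mem_iUnion, mem_Ioi, exists_prop]
    rw [this]
    refine isOpen_biUnion fun t _ => ?_
    apply isOpen_lt _ continuous_const
    have hc := hp.continuous
    continuity
  have hdense : ∀ i k, Dense (U i k) := by
    intro i k
    rw [Metric.dense_iff]
    intro x r hr
    set h := ds i with hh
    set B := L * ‖h‖ with hB
    have hB0 : 0 ≤ B := mul_nonneg hp.Lpos.le (norm_nonneg _)
    obtain ⟨m, hm⟩ := exists_nat_gt (2 * ((k:ℝ)+1) * B)
    set ε₁ := r / (‖h‖ + 1) with hε₁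
    have hε₁0 : 0 < ε₁ := div_pos hr (by positivity)
    set δ := ε₁ / ((m:ℝ) + 2) with hδ
    have hδ0 : 0 < δ := div_pos hε₁0 (by positivity)
    have key : ∃ j : ℕ, 1 ≤ j ∧ j ≤ m+1 ∧ (x + ((j:ℝ)*δ) • h) ∈ U i k := by
      by_contra hcon
      push_neg at hcon
      set ψ : ℕ → ℝ := fun j => p (x + ((j:ℝ)*δ) • h) with hψ
      have hstep : ∀ j : ℕ, j ≤ m → δ / ((k:ℝ)+1) ≤ ψ j + ψ (j+2) - 2 * ψ (j+1) := by
        intro j hj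
        have hnot := hcon (j+1) (by omega) (by omega)
        rw [hU] at hnot
        simp only [mem_setOf_eq, not_exists, not_and, not_lt] at hnot
        have h2 := hnot δ hδ0
        push_cast at h2
        rw [← hh] at h2
        have e1 : (x + (((j:ℕ)+1:ℝ)*δ) • h) + δ • h = x + (((j:ℕ)+2:ℝ)*δ) • h := by
          match_scalars <;> (push_cast; ring)
        have e2 : (x + (((j:ℕ)+1:ℝ)*δ) • h) - δ • h = x + ((j:ℝ)*δ) • h := by
          match_scalars <;> (push_cast; ring)
        rw [e1, e2] at h2
        simp only [hψ]
        push_cast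
        linarith
      have hlipψ : ∀ j : ℕ, |ψ (j+1) - ψ j| ≤ B * δ := by
        intro j
        have hab := hp.abs_sub_le (x + (((j:ℕ)+1:ℝ)*δ) • h) (x + ((j:ℝ)*δ) • h)
        have e3 : (x + (((j:ℕ)+1:ℝ)*δ) • h) - (x + ((j:ℝ)*δ) • h) = δ • h := by
          match_scalars <;> (push_cast; ring)
        rw [e3, norm_smul, Real.norm_eq_abs, abs_of_pos hδ0] at hab
        simp only [hψ]
        push_cast
        calc |p (x + (((j:ℕ)+1:ℝ)*δ) • h) - p (x + ((j:ℝ)*δ) • h)| ≤ L * (δ * ‖h‖) := hab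
        _ = B * δ := by rw [hB]; ring
      have hind : ∀ j : ℕ, j ≤ m+1 → (ψ 1 - ψ 0) + (j:ℝ) * (δ / ((k:ℝ)+1)) ≤ ψ (j+1) - ψ j := by
        intro j
        induction j with
        | zero => intro _; simp
        | succ n ih =>
          intro hn
          have hn' : n ≤ m+1 := by omega
          have hnm : n ≤ m := by omega
          have h1 := ih hn'
          have h2 := hstep n hnm
          push_cast
          show (ψ 1 - ψ 0) + ((n:ℝ)+1) * (δ / ((k:ℝ)+1)) ≤ ψ (n+2) - ψ (n+1)
          have hs : ψ (n+2) - ψ (n+1) ≥ (ψ (n+1) - ψ n) + δ / ((k:ℝ)+1) := by linarith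
          nlinarith [h1, hs]
      have hfin := hind (m+1) (le_refl _)
      have hb1 := hlipψ (m+1)
      have hb0 := hlipψ 0
      rw [abs_le] at hb1 hb0
      have hk1 : (0:ℝ) < (k:ℝ)+1 := by positivity
      have : ((m:ℝ)+1) * (δ / ((k:ℝ)+1)) ≤ 2 * (B * δ) := by
        push_cast at hfin
        linarith [hb1.2, hb0.1, hfin]
      have hml : ((m:ℝ)+1) ≤ 2 * B * ((k:ℝ)+1) := by
        have hc : 0 < δ / ((k:ℝ)+1) := div_pos hδ0 hk1
        have h8 : ((m:ℝ)+1) * (δ/((k:ℝ)+1)) ≤ (2*B*((k:ℝ)+1)) * (δ/((k:ℝ)+1)) := by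
          calc ((m:ℝ)+1) * (δ/((k:ℝ)+1)) ≤ 2*(B*δ) := this
          _ = (2*B*((k:ℝ)+1)) * (δ/((k:ℝ)+1)) := by field_simp
        exact le_of_mul_le_mul_right h8 hc
      have h9 : (2:ℝ)*B*((k:ℝ)+1) = 2*((k:ℝ)+1)*B := by ring
      linarith
    obtain ⟨j, hj1, hjm, hjU⟩ := key
    refine ⟨x + ((j:ℝ)*δ) • h, ?_, hjU⟩
    rw [Metric.mem_ball, dist_eq_norm]
    have e4 : x + ((j:ℝ)*δ) • h - x = ((j:ℝ)*δ) • h := by abel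
    rw [e4, norm_smul, Real.norm_eq_abs]
    have hj0 : (0:ℝ) ≤ (j:ℝ)*δ := mul_nonneg (Nat.cast_nonneg j) hδ0.le
    rw [abs_of_nonneg hj0]
    have hjle : (j:ℝ)*δ < ε₁ := by
      have : (j:ℝ) ≤ (m:ℝ)+1 := by exact_mod_cast hjm
      have h5 : ((m:ℝ)+1)*δ < ((m:ℝ)+2)*δ := by nlinarith
      have h6 : ((m:ℝ)+2)*δ = ε₁ := by
        rw [hδ, mul_comm]
        exact div_mul_cancel₀ _ (by positivity)
      nlinarith
    have : ε₁ * (‖h‖+1) = r := by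
      rw [hε₁]
      exact div_mul_cancel₀ _ (by positivity)
    nlinarith [norm_nonneg h, hε₁0]
  have hsub : (⋂ ik : ℕ × ℕ, U ik.1 ik.2) ⊆ {x : X | DPt p x} := by
    intro x hx
    simp only [mem_iInter] at hx
    intro d
    refine le_antisymm ?_ (gd_pair_nonneg hp x d)
    have hray : ∀ i : ℕ, gd p x (ds i) + gd p x (-(ds i)) ≤ 0 := by
      intro i
      by_contra hpos
      push_neg at hpos
      obtain ⟨k, hk⟩ := exists_nat_one_div_lt hpos
      obtain ⟨t, ht, hlt⟩ := hx (i, k)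
      have q1 : gd p x (ds i) ≤ qd p x (ds i) t := gd_le_qd hp x (ds i) ht
      have q2 : gd p x (-(ds i)) ≤ qd p x (-(ds i)) t := gd_le_qd hp x (-(ds i)) ht
      have e5 : x + t • (-(ds i)) = x - t • ds i := by
        rw [smul_neg]; abel
      have hq : qd p x (ds i) t + qd p x (-(ds i)) t
          = (p (x + t • ds i) + p (x - t • ds i) - 2 * p x) / t := by
        rw [qd, qd, e5]
        field_simp
        ring
      have h7 : (p (x + t • ds i) + p (x - t • ds i) - 2 * p x) / t < 1 / ((k:ℝ)+1) := by
        rw [div_lt_div_iff₀ ht (by positivity : (0:ℝ) < (k:ℝ)+1)]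
        calc (p (x + t • ds i) + p (x - t • ds i) - 2 * p x) * ((k:ℝ)+1)
            < (t / ((k:ℝ)+1)) * ((k:ℝ)+1) := by
              have hk1 : (0:ℝ) < (k:ℝ)+1 := by positivity
              nlinarith
        _ = t := by field_simp
        _ = 1 * t := by ring
      linarith [hk]
    refine le_of_forall_pos_le_add fun ε hε => ?_
    obtain ⟨i, hi⟩ := Metric.denseRange_iff.1 hdr d (ε / (2 * L))
      (div_pos hε (by linarith [hp.Lpos]))
    have g1 : gd p x d ≤ gd p x (ds i) + L * ‖d - ds i‖ := gd_lip hp x d (ds i)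
    have g2 : gd p x (-d) ≤ gd p x (-(ds i)) + L * ‖-d - -(ds i)‖ := gd_lip hp x (-d) (-(ds i))
    have e6 : ‖-d - -(ds i)‖ = ‖d - ds i‖ := by
      rw [show -d - -(ds i) = -(d - ds i) by abel, norm_neg]
    rw [e6] at g2
    have hdist : ‖d - ds i‖ < ε / (2 * L) := by
      rw [← dist_eq_norm]
      exact hi
    have := hray i
    have hL := hp.Lpos
    have : L * ‖d - ds i‖ < ε / 2 := by
      rw [lt_div_iff₀ (by norm_num : (0:ℝ) < 2)]
      calc L * ‖d - ds i‖ * 2 < L * (ε / (2*L)) * 2 := by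
            nlinarith [norm_nonneg (d - ds i)]
        _ = ε := by field_simp
    linarith [g1, g2, hray i]
  have hGdense : Dense (⋂ ik : ℕ × ℕ, U ik.1 ik.2) := by
    apply dense_iInter_of_isOpen
    · exact fun ik => hopen ik.1 ik.2
    · exact fun ik => hdense ik.1 ik.2
  exact hGdense.mono hsub

theorem smooth_near [CompleteSpace X] [TopologicalSpace.SeparableSpace X]
    (hp : SublinData p L) {y : X} (hy : p y = 1) {ε : ℝ} (hε : 0 < ε) :
    ∃ z g, Nice p z g ∧ ‖z - y‖ < ε := by
  have hL := hp.Lpos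
  set M := ‖y‖ + 1 with hM
  have hM1 : 1 ≤ M := by rw [hM]; linarith [norm_nonneg y]
  have hden : 0 < 1 + 4*L*M := by nlinarith
  set ε' := min 1 (min ((2*L)⁻¹) (ε/(1+4*L*M))) with hε'
  have hε'0 : 0 < ε' := by
    rw [hε']
    exact lt_min one_pos (lt_min (by positivity) (div_pos hε hden))
  have hε'1 : ε' ≤ 1 := min_le_left _ _
  have hε'2 : ε' ≤ (2*L)⁻¹ := le_trans (min_le_right _ _) (min_le_left _ _)
  have hε'3 : ε' ≤ ε/(1+4*L*M) := le_trans (min_le_right _ _) (min_le_right _ _)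
  obtain ⟨x, hxball, hxD⟩ := Metric.dense_iff.1 (dense_dpt hp) y ε' hε'0
  rw [Metric.mem_ball, dist_eq_norm] at hxball
  have hxy : ‖x - y‖ < ε' := hxball
  have hpxy : |p x - p y| ≤ L * ‖x - y‖ := hp.abs_sub_le x y
  have hLε : L * ‖x - y‖ ≤ 1/2 := by
    calc L * ‖x - y‖ ≤ L * ε' := by nlinarith [norm_nonneg (x - y)]
    _ ≤ L * (2*L)⁻¹ := by nlinarith
    _ = 1/2 := by field_simp
  have hpx : 1/2 ≤ p x := by
    rw [abs_le] at hpxy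
    rw [hy] at hpxy
    linarith [hpxy.1]
  have hpx0 : 0 < p x := by linarith
  obtain ⟨g, hg⟩ := nice_of_dpt hp hxD hpx0
  set z := (p x)⁻¹ • x with hz
  refine ⟨z, g, hg, ?_⟩
  have hxnorm : ‖x‖ ≤ M := by
    calc ‖x‖ = ‖y + (x - y)‖ := by congr 1; abel
    _ ≤ ‖y‖ + ‖x - y‖ := norm_add_le _ _
    _ ≤ ‖y‖ + 1 := by linarith
  have h3 : |1 - p x| ≤ L * ε' := by
    have e : |1 - p x| = |p x - p y| := by rw [hy, abs_sub_comm]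
    rw [e]
    calc |p x - p y| ≤ L * ‖x - y‖ := hpxy
    _ ≤ L * ε' := by nlinarith [norm_nonneg (x - y)]
  have hinv2 : (p x)⁻¹ ≤ 2 := by
    have h4 : ((1:ℝ)/2)⁻¹ = 2 := by norm_num
    calc (p x)⁻¹ ≤ ((1:ℝ)/2)⁻¹ := by
          apply inv_anti₀ (by norm_num) hpx
    _ = 2 := h4
  have habs : |(p x)⁻¹ - 1| ≤ 2 * (L * ε') := by
    have e : (p x)⁻¹ - 1 = (1 - p x) * (p x)⁻¹ := by field_simp
    rw [e, abs_mul, abs_of_nonneg (inv_nonneg.2 hpx0.le)]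
    calc |1 - p x| * (p x)⁻¹ ≤ (L * ε') * 2 := by
          apply mul_le_mul h3 hinv2 (by positivity) (by positivity)
    _ = 2 * (L * ε') := by ring
  have hzx : ‖z - x‖ ≤ 2*L*ε'*M := by
    have e1 : z - x = ((p x)⁻¹ - 1) • x := by
      rw [hz, sub_smul, one_smul]
    rw [e1, norm_smul, Real.norm_eq_abs]
    calc |(p x)⁻¹ - 1| * ‖x‖ ≤ (2 * (L * ε')) * M := by
          apply mul_le_mul habs hxnorm (norm_nonneg x) (by positivity)
    _ = 2*L*ε'*M := by ring
  have htri : ‖z - y‖ ≤ ‖z - x‖ + ‖x - y‖ := by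
    calc ‖z - y‖ = ‖(z - x) + (x - y)‖ := by congr 1; abel
    _ ≤ ‖z - x‖ + ‖x - y‖ := norm_add_le _ _
  have hkey : (2*L*M+1) * ε' < ε := by
    have k1 : (2*L*M+1) * ε' ≤ (2*L*M+1) * (ε/(1+4*L*M)) :=
      mul_le_mul_of_nonneg_left hε'3 (by nlinarith)
    have k2 : (2*L*M+1) * (ε/(1+4*L*M)) < ε := by
      rw [← mul_div_assoc, div_lt_iff₀ hden]
      nlinarith [mul_pos (mul_pos hL (show (0:ℝ) < M by linarith)) hε]
    exact k1.trans_lt k2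
  calc ‖z - y‖ ≤ ‖z - x‖ + ‖x - y‖ := htri
  _ < 2*L*ε'*M + ε' := by linarith
  _ = (2*L*M+1) * ε' := by ring
  _ < ε := hkey

theorem grads_infinite [CompleteSpace X] [TopologicalSpace.SeparableSpace X]
    (hp : SublinData p L)
    (hnp : ¬ ∃ (n : ℕ) (f : Fin n → X →L[ℝ] ℝ) (a : Fin n → ℝ),
      {x : X | p x ≤ 1} = ⋂ i, {x : X | f i x ≤ a i}) :
    (Grads p {y | p y = 1}).Infinite := by
  by_contra hfin
  rw [Set.not_infinite] at hfin
  set T := hfin.toFinset with hT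
  have key : {x : X | p x ≤ 1} = ⋂ g ∈ T, {x : X | g x ≤ 1} := by
    apply Subset.antisymm
    · intro x hx
      simp only [mem_iInter]
      intro g hg
      rw [hT, Set.Finite.mem_toFinset] at hg
      obtain ⟨yy, hyy, hn⟩ := hg
      exact le_trans (hn.2.1.1 x) hx
    · intro x hx
      simp only [mem_iInter] at hx
      by_contra hpx
      simp only [mem_setOf_eq, not_le] at hpx
      have hpx0 : 0 < p x := lt_trans one_pos hpx
      set y := (p x)⁻¹ • x with hy
      have hpy : p y = 1 := by
        rw [hy, hp.smul_eq _ _ (by positivity), inv_mul_cancel₀ (ne_of_gt hpx0)]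
      have hch : ∀ n : ℕ, ∃ zg : X × (X →L[ℝ] ℝ),
          Nice p zg.1 zg.2 ∧ ‖zg.1 - y‖ < 1/((n:ℝ)+1) := by
        intro n
        obtain ⟨z, g, hzg, hz⟩ := smooth_near hp hpy
          (show (0:ℝ) < 1/((n:ℝ)+1) by positivity)
        exact ⟨(z, g), hzg, hz⟩
      choose zg hnice hclose using hch
      have hmem : ∀ n, (zg n).2 ∈ T := by
        intro n
        rw [hT, Set.Finite.mem_toFinset]
        exact ⟨(zg n).1, (hnice n).1, hnice n⟩
      set F : ℕ → {g // g ∈ T} := fun n => ⟨(zg n).2, hmem n⟩ with hF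
      obtain ⟨g₀, hg₀⟩ := Finite.exists_infinite_fiber F
      rw [Set.infinite_coe_iff] at hg₀
      have hgy : (g₀ : X →L[ℝ] ℝ) y = 1 := by
        by_contra hne
        set ε := |(g₀ : X →L[ℝ] ℝ) y - 1| with hεdef
        have hd : 0 < ε := abs_pos.2 (sub_ne_zero.2 hne)
        set G := ‖(g₀ : X →L[ℝ] ℝ)‖ with hG
        have hG0 : 0 ≤ G := norm_nonneg _
        obtain ⟨N, hN⟩ := exists_nat_one_div_lt (show 0 < ε / (G + 1) by positivity)
        obtain ⟨n, hnfib, hnN⟩ := hg₀.exists_gt N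
        have hfib : (zg n).2 = (g₀ : X →L[ℝ] ℝ) := by
          have : F n = g₀ := hnfib
          exact congrArg Subtype.val this
        have hz1 : (g₀ : X →L[ℝ] ℝ) (zg n).1 = 1 := by
          rw [← hfib]
          exact (hnice n).2.1.2
        have hbound : |(g₀ : X →L[ℝ] ℝ) y - 1| ≤ G * ‖y - (zg n).1‖ := by
          rw [← hz1, ← map_sub]
          exact (g₀ : X →L[ℝ] ℝ).le_opNorm _
        have hmono : 1/((n:ℝ)+1) ≤ 1/((N:ℝ)+1) := by
          apply one_div_le_one_div_of_le (by positivity)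
          have : (N:ℝ) ≤ (n:ℝ) := by exact_mod_cast hnN.le
          linarith
        have hyz : ‖y - (zg n).1‖ < ε / (G+1) := by
          rw [norm_sub_rev]
          calc ‖(zg n).1 - y‖ < 1/((n:ℝ)+1) := hclose n
          _ ≤ 1/((N:ℝ)+1) := hmono
          _ < ε / (G+1) := hN
        have : ε < ε := by
          calc ε ≤ G * ‖y - (zg n).1‖ := hbound
          _ ≤ (G+1) * ‖y - (zg n).1‖ := by nlinarith [norm_nonneg (y - (zg n).1)]
          _ < (G+1) * (ε/(G+1)) := by
              apply mul_lt_mul_of_pos_left hyz (by positivity)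
          _ = ε := by field_simp
        linarith
      have hle1 : (g₀ : X →L[ℝ] ℝ) x ≤ 1 := hx _ g₀.2
      have heq : (g₀ : X →L[ℝ] ℝ) x = p x := by
        have hxy : x = (p x) • y := by
          rw [hy, smul_smul, mul_inv_cancel₀ (ne_of_gt hpx0), one_smul]
        have h1 : (g₀ : X →L[ℝ] ℝ) ((p x) • y) = p x := by
          rw [map_smul]; simp [hgy]
        rw [← hxy] at h1
        exact h1
      linarith
  apply hnp
  set l := T.toList with hl
  refine ⟨l.length, fun i => l.get i, fun _ => 1, ?_⟩
  rw [key]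
  ext x
  simp only [mem_iInter, mem_setOf_eq]
  constructor
  · intro hx i
    exact hx (l.get i) (by rw [← Finset.mem_toList, ← hl]; exact l.get_mem i)
  · intro hx g hg
    rw [← Finset.mem_toList (s := T), ← hl, List.mem_iff_get] at hg
    obtain ⟨i, rfl⟩ := hg
    exact hx i

variable (p) in
/-- boundary points not blocked from any of the already-chosen outside points -/
def RL (l : List X) : Set X := {y | ∀ b ∈ l, ¬ Blocked p b y}

variable (p) in
/-- invariant of the greedy construction -/
def InvL (l : List X) : Prop :=
  (∀ b ∈ l, 1 < p b) ∧ List.Pairwise (Sees p) l ∧ l.Nodup ∧ (Grads p (RL p l)).Infinite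

theorem list_thresh {α : Type*} (l : List α) (Q : α → ℝ → Prop)
    (h : ∀ b ∈ l, ∃ e, 0 < e ∧ ∀ ε', 0 < ε' → ε' ≤ e → Q b ε') :
    ∃ e, 0 < e ∧ ∀ b ∈ l, ∀ ε', 0 < ε' → ε' ≤ e → Q b ε' := by
  induction l with
  | nil => exact ⟨1, one_pos, by simp⟩
  | cons a t ih =>
    obtain ⟨e1, he1, hQ1⟩ := h a List.mem_cons_self
    obtain ⟨e2, he2, hQ2⟩ := ih fun b hb => h b (List.mem_cons_of_mem a hb)
    refine ⟨min e1 e2, lt_min he1 he2, ?_⟩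
    rintro b hb ε' hε' hle
    rcases List.mem_cons.1 hb with rfl | hb
    · exact hQ1 ε' hε' (hle.trans (min_le_left _ _))
    · exact hQ2 b hb ε' hε' (hle.trans (min_le_right _ _))

theorem step_lemma [CompleteSpace X] [TopologicalSpace.SeparableSpace X]
    (hp : SublinData p L) (l : List X) (hInv : InvL p l) : ∃ b, InvL p (b :: l) := by
  obtain ⟨hout, hpair, hnodup, hinf⟩ := hInv
  by_cases hcase : ∃ u, u ∈ RL p l ∧ (∃ gu, Nice p u gu) ∧
      ∃ δ : ℝ, 0 < δ ∧ δ < 1 ∧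
        (Grads p {y | y ∈ RL p l ∧ ∀ g, Nice p y g → g u ≤ 1 - δ}).Infinite
  · obtain ⟨u, huR, ⟨gu, hgu⟩, δ, hδ0, hδ1, hinf'⟩ := hcase
    have hpu : p u = 1 := hgu.1
    have hthresh : ∀ b ∈ l, ∃ e : ℝ, 0 < e ∧ ∀ ε' : ℝ, 0 < ε' → ε' ≤ e →
        Sees p b ((1+ε') • u) := by
      intro b hb
      have hnb : ¬ Blocked p b u := huR b hb
      have hsee : Sees p b u := by
        by_contra hns
        exact hnb (blocked_of_not_sees hp hpu hns)
      obtain ⟨z, hzseg, hzp⟩ := hsee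
      obtain ⟨a, c, ha, hc, hac, hz⟩ := hzseg
      refine ⟨(1 - p z)/2, by linarith, ?_⟩
      intro ε' hε'0 hε'le
      refine ⟨a • b + c • ((1+ε') • u), ⟨a, c, ha, hc, hac, rfl⟩, ?_⟩
      have he : a • b + c • ((1+ε') • u) = z + (c * ε') • u := by
        rw [← hz]; match_scalars <;> ring
      rw [he]
      have hc1 : c ≤ 1 := by linarith
      calc p (z + (c*ε') • u) ≤ p z + p ((c*ε') • u) := hp.add_le _ _
      _ = p z + (c*ε') * p u := by rw [hp.smul_eq _ _ (mul_nonneg hc hε'0.le)]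
      _ = p z + c * ε' := by rw [hpu]; ring
      _ ≤ p z + ε' := by nlinarith
      _ < 1 := by linarith
    obtain ⟨e, he0, hth⟩ := list_thresh l _ hthresh
    set ε := min e (δ/2) with hεd
    have hε0 : 0 < ε := lt_min he0 (by linarith)
    have hεe : ε ≤ e := min_le_left _ _
    have hεδ : ε ≤ δ/2 := min_le_right _ _
    set b' := (1+ε) • u with hb'
    have hpb' : p b' = 1 + ε := by
      rw [hb', hp.smul_eq _ _ (by linarith), hpu]; ring
    have hval : ∀ g : X →L[ℝ] ℝ, g b' = (1+ε) * g u := by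
      intro g; rw [hb', map_smul]; simp
    have hb'notin : b' ∉ l := by
      intro hmem
      apply huR b' hmem
      refine ⟨gu, hgu.2.1.1, hgu.2.1.2, ?_⟩
      rw [hval, hgu.2.1.2]
      nlinarith
    have hsees : ∀ b ∈ l, Sees p b' b := fun b hb =>
      sees_symm p (hth b hb ε hε0 hεe)
    refine ⟨b', ?_, ?_, ?_, ?_⟩
    · rintro b hb
      rcases List.mem_cons.1 hb with rfl | hb
      · rw [hpb']; linarith
      · exact hout b hb
    · exact List.Pairwise.cons hsees hpair
    · exact List.nodup_cons.2 ⟨hb'notin, hnodup⟩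
    · apply Set.Infinite.mono ?_ hinf'
      rintro g ⟨y, ⟨hyR, hycond⟩, hNice⟩
      refine ⟨y, ?_, hNice⟩
      intro b hb
      rcases List.mem_cons.1 hb with rfl | hb
      · rintro ⟨g'', hg''le, hg''y, hg''b⟩
        have hgeq : g'' = g := hNice.2.2 g'' ⟨hg''le, hg''y⟩
        subst hgeq
        have hgu' : g'' u ≤ 1 - δ := hycond g'' hNice
        rw [hval] at hg''b
        have : (1+ε) * g'' u ≤ (1+ε) * (1-δ) :=
          mul_le_mul_of_nonneg_left hgu' (by linarith)
        nlinarith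
      · exact hyR b hb
  · exfalso
    push_neg at hcase
    obtain ⟨γ₁, hγ₁, γ₂, hγ₂, hnn⟩ := hinf.nontrivial
    obtain ⟨y₁, hy₁R, hn₁⟩ := hγ₁
    obtain ⟨y₂, hy₂R, hn₂⟩ := hγ₂
    set mid := (1/2 : ℝ) • y₁ + (1/2 : ℝ) • y₂ with hmid
    have hmid_le : p mid ≤ 1 := by
      calc p mid ≤ (1/2) * p y₁ + (1/2) * p y₂ :=
        hp.combo (by norm_num) (by norm_num) _ _
      _ = 1 := by rw [hn₁.1, hn₂.1]; norm_num
    have hmid_ge : ∀ δ : ℝ, 0 < δ → δ < 1 → 1 - δ < p mid := by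
      intro δ h0 h1
      have hfin₁ := hcase y₁ hy₁R ⟨γ₁, hn₁⟩ δ h0 h1
      have hfin₂ := hcase y₂ hy₂R ⟨γ₂, hn₂⟩ δ h0 h1
      have hdiff := (hinf.diff (hfin₁.union hfin₂)).nonempty
      obtain ⟨γ, hγmem, hγnot⟩ := hdiff
      rw [Set.mem_union] at hγnot
      push_neg at hγnot
      obtain ⟨hγnot₁, hγnot₂⟩ := hγnot
      obtain ⟨y, hyR, hn⟩ := hγmem
      have h1 : ¬ (∀ g, Nice p y g → g y₁ ≤ 1-δ) := fun hall => hγnot₁ ⟨y, ⟨hyR, hall⟩, hn⟩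
      have h2 : ¬ (∀ g, Nice p y g → g y₂ ≤ 1-δ) := fun hall => hγnot₂ ⟨y, ⟨hyR, hall⟩, hn⟩
      push_neg at h1 h2
      obtain ⟨g, hgN, hgy₁⟩ := h1
      obtain ⟨g', hg'N, hg'y₂⟩ := h2
      have hge : g = γ := hn.2.2 g hgN.2.1
      have hg'e : g' = γ := hn.2.2 g' hg'N.2.1
      subst hge
      rw [hg'e] at hg'y₂
      calc 1 - δ = (1/2)*(1-δ) + (1/2)*(1-δ) := by ring
      _ < (1/2) * (g y₁) + (1/2) * (g y₂) := by linarith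
      _ = g mid := by rw [hmid, map_add, map_smul, map_smul]; simp
      _ ≤ p mid := hn.2.1.1 mid
    have hmid1 : p mid = 1 := by
      refine le_antisymm hmid_le ?_
      by_contra hlt
      push_neg at hlt
      set δ := min (1 - p mid) (1/2) with hδd
      have hδ0 : 0 < δ := lt_min (by linarith) (by norm_num)
      have hδ1 : δ < 1 := lt_of_le_of_lt (min_le_right _ _) (by norm_num)
      have := hmid_ge δ hδ0 hδ1
      have : δ ≤ 1 - p mid := min_le_left _ _
      linarith [hmid_ge δ hδ0 hδ1]
    obtain ⟨h, hh⟩ := support_exists hp hmid1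
    have h₁le : h y₁ ≤ 1 := le_trans (hh.1 y₁) (le_of_eq hn₁.1)
    have h₂le : h y₂ ≤ 1 := le_trans (hh.1 y₂) (le_of_eq hn₂.1)
    have hsum : (1/2) * h y₁ + (1/2) * h y₂ = 1 := by
      have hm : h mid = 1 := hh.2
      rw [hmid, map_add, map_smul, map_smul] at hm
      simpa using hm
    have h₁ : h y₁ = 1 := by linarith
    have h₂ : h y₂ = 1 := by linarith
    have e₁ : h = γ₁ := hn₁.2.2 h ⟨hh.1, h₁⟩
    have e₂ : h = γ₂ := hn₂.2.2 h ⟨hh.1, h₂⟩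
    exact hnn (e₁ ▸ e₂)

theorem abstract_main [CompleteSpace X] [TopologicalSpace.SeparableSpace X]
    (hp : SublinData p L)
    (hnp : ¬ ∃ (n : ℕ) (f : Fin n → X →L[ℝ] ℝ) (a : Fin n → ℝ),
      {x : X | p x ≤ 1} = ⋂ i, {x : X | f i x ≤ a i}) :
    ∃ A : Set X, A.Infinite ∧ (∀ x ∈ A, 1 < p x) ∧
      ∀ a ∈ A, ∀ b ∈ A, a ≠ b → ∃ z ∈ segment ℝ a b, p z < 1 := by
  have hbase : InvL p [] := by
    refine ⟨by simp, List.Pairwise.nil, List.nodup_nil, ?_⟩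
    apply Set.Infinite.mono ?_ (grads_infinite hp hnp)
    apply grads_mono
    intro y _
    intro b hb
    simp at hb
  choose next hnext using fun (l : {l : List X // InvL p l}) => step_lemma hp l.1 l.2
  set ch : ℕ → {l : List X // InvL p l} :=
    fun n => Nat.rec ⟨[], hbase⟩ (fun _ prev => ⟨next prev :: prev.1, hnext prev⟩) n with hch
  have hsucc : ∀ n, (ch (n+1)).1 = next (ch n) :: (ch n).1 := fun n => rfl
  have hlen : ∀ n, (ch n).1.length = n := by
    intro n
    induction n with
    | zero => rfl
    | succ k ih => rw [hsucc, List.length_cons, ih]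
  have hpref : ∀ m n, m ≤ n → (ch m).1 <:+ (ch n).1 := by
    intro m n hmn
    induction n with
    | zero =>
      have : m = 0 := Nat.le_zero.1 hmn
      subst this
      exact List.suffix_refl _
    | succ k ih =>
      rcases Nat.lt_or_ge m (k+1) with hlt | hge
      · have : m ≤ k := by omega
        refine (ih this).trans ?_
        rw [hsucc]
        exact List.suffix_cons _ _
      · have : m = k+1 := by omega
        subst this
        exact List.suffix_refl _
  set A : Set X := {x | ∃ n, x ∈ (ch n).1} with hA
  haveI := Classical.decEq X
  refine ⟨A, ?_, ?_, ?_⟩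
  · intro hfin
    set m := hfin.toFinset.card with hm
    have hsub : ((ch (m+1)).1.toFinset : Finset X) ⊆ hfin.toFinset := by
      intro x hx
      rw [List.mem_toFinset] at hx
      rw [Set.Finite.mem_toFinset]
      exact ⟨m+1, hx⟩
    have hcard : ((ch (m+1)).1.toFinset).card = m+1 := by
      rw [List.toFinset_card_of_nodup (ch (m+1)).2.2.2.1]
      exact hlen (m+1)
    have := Finset.card_le_card hsub
    rw [hcard, ← hm] at this
    omega
  · rintro x ⟨n, hx⟩
    exact (ch n).2.1 x hx
  · rintro a ⟨na, hna⟩ b ⟨nb, hnb⟩ hab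
    set N := max na nb with hN
    have ha' : a ∈ (ch N).1 := (hpref na N (le_max_left _ _)).subset hna
    have hb' : b ∈ (ch N).1 := (hpref nb N (le_max_right _ _)).subset hnb
    have hpw := (ch N).2.2.1
    have hsym : Symmetric (Sees p) := fun x y h => sees_symm p h
    haveI : Std.Symm (Sees p) := ⟨fun x y h => hsym h⟩
    exact hpw.forall ha' hb' hab

end Deriv

end Abstract


theorem stmt_15 {X : Type*} [NormedAddCommGroup X] [InnerProductSpace ℝ X]
    [CompleteSpace X] [TopologicalSpace.SeparableSpace X]
    (Cb : Set X) (hclosed : IsClosed Cb) (hconv : Convex ℝ Cb)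
    (hbody : (interior Cb).Nonempty)
    (hpoly : ¬ ∃ (n : ℕ) (f : Fin n → X →L[ℝ] ℝ) (a : Fin n → ℝ),
      Cb = ⋂ i, {x : X | f i x ≤ a i}) :
    ∃ A : Set X, A.Infinite ∧ A ∩ Cb = ∅ ∧
      ∀ a ∈ A, ∀ b ∈ A, a ≠ b → (segment ℝ a b ∩ Cb).Nonempty := by
  obtain ⟨x0, hx0⟩ := hbody
  set T : X ≃ₜ X := Homeomorph.addRight x0 with hT
  set S : Set X := T ⁻¹' Cb with hS
  have hSmem : ∀ z : X, z ∈ S ↔ z + x0 ∈ Cb := fun z => Iff.rfl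
  have hSconv : Convex ℝ S := by
    intro z1 h1 z2 h2 a b ha hb hab
    rw [mem_preimage] at *
    have he : (T : X → X) (a • z1 + b • z2) = a • (z1 + x0) + b • (z2 + x0) := by
      show (a • z1 + b • z2) + x0 = a • (z1 + x0) + b • (z2 + x0)
      match_scalars <;> simp [hab]
    rw [he]
    exact hconv h1 h2 ha hb hab
  have hSclosed : IsClosed S := hclosed.preimage (T : X ≃ₜ X).continuous
  have hS0 : (0 : X) ∈ interior S := by
    rw [hS, ← Homeomorph.preimage_interior]
    show (0:X) + x0 ∈ interior Cb
    rwa [zero_add]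
  have hS0nhds : S ∈ nhds (0 : X) := mem_interior_iff_mem_nhds.1 hS0
  obtain ⟨r, hr, hball⟩ := Metric.mem_nhds_iff.1 (mem_interior_iff_mem_nhds.1 hS0)
  set p : X → ℝ := gauge S with hpdef
  have habs : Absorbent ℝ S := absorbent_nhds_zero hS0nhds
  have hgball : ∀ z : X, p z ≤ r⁻¹ * ‖z‖ := by
    intro z
    calc p z ≤ gauge (Metric.ball (0:X) r) z := gauge_mono (absorbent_ball_zero hr) hball z
    _ = ‖z‖ / r := gauge_ball hr.le z
    _ = r⁻¹ * ‖z‖ := by rw [div_eq_inv_mul]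
  have hp : SublinData p r⁻¹ := by
    refine ⟨?_, ?_, ?_, by positivity, ?_⟩
    · exact gauge_add_le hSconv habs
    · intro c x hc
      rw [hpdef]
      rw [gauge_smul_of_nonneg hc]
      simp
    · exact fun x => gauge_nonneg x
    · intro x y
      calc p x = p (y + (x - y)) := by congr 1; abel
      _ ≤ p y + p (x - y) := gauge_add_le hSconv habs _ _
      _ ≤ p y + r⁻¹ * ‖x - y‖ := by linarith [hgball (x - y)]
  have hmem_iff : ∀ z : X, p z ≤ 1 ↔ z ∈ S := by
    intro z
    rw [hpdef, gauge_le_one_iff_mem_closure hSconv hS0nhds, hSclosed.closure_eq]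
  have hnp : ¬ ∃ (n : ℕ) (f : Fin n → X →L[ℝ] ℝ) (a : Fin n → ℝ),
      {x : X | p x ≤ 1} = ⋂ i, {x : X | f i x ≤ a i} := by
    rintro ⟨n, f, a, heq⟩
    apply hpoly
    refine ⟨n, f, fun i => a i + f i x0, ?_⟩
    ext x
    have h1 : x ∈ Cb ↔ x - x0 ∈ S := by
      rw [hSmem]
      simp
    rw [h1, ← hmem_iff]
    have h2 : (x - x0) ∈ {x : X | p x ≤ 1} ↔ (x - x0) ∈ ⋂ i, {x : X | f i x ≤ a i} := by
      rw [heq]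
    simp only [mem_setOf_eq] at h2
    rw [h2]
    simp only [mem_iInter, mem_setOf_eq, map_sub]
    constructor
    · intro h i; linarith [h i]
    · intro h i; linarith [h i]
  obtain ⟨A0, hA0inf, hA0out, hA0see⟩ := abstract_main hp hnp
  refine ⟨(fun z => z + x0) '' A0, ?_, ?_, ?_⟩
  · exact hA0inf.image (fun a _ b _ h => by simpa using h)
  · ext x
    simp only [mem_inter_iff, mem_image, mem_empty_iff_false, iff_false, not_and]
    rintro ⟨z, hz, rfl⟩ hmem
    have h1 : z ∈ S := (hSmem z).2 hmem
    have h2 : p z ≤ 1 := (hmem_iff z).2 h1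
    linarith [hA0out z hz]
  · rintro a ⟨za, hza, rfl⟩ b ⟨zb, hzb, rfl⟩ hab
    have hzab : za ≠ zb := by
      intro h; exact hab (by rw [h])
    obtain ⟨z, hzseg, hzp⟩ := hA0see za hza zb hzb hzab
    refine ⟨z + x0, ?_, ?_⟩
    · obtain ⟨s, t, hs, ht, hst, hz⟩ := hzseg
      refine ⟨s, t, hs, ht, hst, ?_⟩
      rw [← hz]
      match_scalars <;> simp [hst]
    · rw [← hSmem]
      exact (hmem_iff z).1 hzp.le
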